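/- Let p ≡ 1 (mod 8) be prime, √2 ∈ 𝔽_p a square root of 2, and write p = a² + b² with a odd, b even, a + b ≡ 1 (mod 4). If 32 divides (a-1)² + b², then 1+√2 is a square in 𝔽_p. -/

import Mathlib

private lemma sq_dvd_prime_aux {p : ℕ} (hp : p.Prime) {d : ℕ} (h : d ^ 2 ∣ p) : d = 1 := by
  rcases hp.eq_one_or_self_of_dvd _ h with h1 | h1
  · have : d ∣ 1 := h1 ▸ dvd_pow_self d two_ne_zero
    exact Nat.eq_one_of_dvd_one this
  · have hdp : d ∣ p := h1 ▸ dvd_pow_self d two_ne_zero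
    rcases hp.eq_one_or_self_of_dvd d hdp with h2 | h2
    · subst h2; simp at h1; omega
    · subst h2; nlinarith [hp.two_le, h1]

private lemma isSquare_of_mod_sq {p : ℕ} [Fact p.Prime] (hp4 : p % 4 = 1)
    (m : ℕ) (hm : Odd m) (c : ℤ) (hdvd : (m : ℤ) ∣ (p : ℤ) - c ^ 2)
    (hg : Int.gcd c m = 1) : IsSquare ((m : ℤ) : ZMod p) := by
  apply ZMod.isSquare_of_jacobiSym_eq_one
  have h1 : jacobiSym (m : ℤ) p = jacobiSym (p : ℤ) m :=
    jacobiSym.quadratic_reciprocity_one_mod_four' hm hp4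
  have h2 : jacobiSym (p : ℤ) m = jacobiSym (c ^ 2) m := by
    apply jacobiSym.mod_left'
    exact Int.modEq_iff_dvd.mpr
      (by rw [show c ^ 2 - (p : ℤ) = -((p : ℤ) - c ^ 2) by ring]; exact dvd_neg.mpr hdvd)
  rw [h1, h2, jacobiSym.sq_one' hg]

theorem stmt12 (p : ℕ) (hp : p.Prime) (h8 : p % 8 = 1) (s : ZMod p) (hs : s ^ 2 = 2)
    (a b : ℤ) (hab : (p : ℤ) = a ^ 2 + b ^ 2)
    (ha : Odd a) (hb : Even b) (habm : (a + b) % 4 = 1)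
    (hdvd : (32 : ℤ) ∣ (a - 1) ^ 2 + b ^ 2) :
    IsSquare (1 + s) := by
  haveI : Fact p.Prime := ⟨hp⟩
  have hp4 : p % 4 = 1 := by omega
  have hp2 : p ≠ 2 := by omega
  -- Step 1 : a + b ≡ 1 (mod 8)
  obtain ⟨k, hk⟩ := ha
  obtain ⟨l, hl⟩ := hb
  have h8kl : (8 : ℤ) ∣ k ^ 2 + l ^ 2 := by
    obtain ⟨t, ht⟩ := hdvd
    rw [hk, hl] at ht
    exact ⟨t, by ring_nf at ht ⊢; linarith⟩
  have hzm : ((k : ZMod 8)) ^ 2 + (l : ZMod 8) ^ 2 = 0 := by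
    have := (ZMod.intCast_zmod_eq_zero_iff_dvd (k ^ 2 + l ^ 2) 8).mpr h8kl
    push_cast at this; exact this
  have hdec : ∀ x y : ZMod 8, x ^ 2 + y ^ 2 = 0 → 2 * (x + y) = 0 := by decide
  have h2kl : (8 : ℤ) ∣ 2 * (k + l) := by
    apply (ZMod.intCast_zmod_eq_zero_iff_dvd (2 * (k + l)) 8).mp
    push_cast
    exact hdec _ _ hzm
  have h8ab : (a + b) % 8 = 1 := by omega
  have haodd : a % 2 = 1 := by omega
  -- Step 2 : coprimality of a and b
  have hgab : Int.gcd a b = 1 := by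
    have hd1 : ((Int.gcd a b : ℤ)) ∣ a := Int.gcd_dvd_left _ _
    have hd2 : ((Int.gcd a b : ℤ)) ∣ b := Int.gcd_dvd_right _ _
    have hsq : ((Int.gcd a b : ℤ)) ^ 2 ∣ (p : ℤ) := by
      rw [hab]; exact dvd_add (pow_dvd_pow_of_dvd hd1 2) (pow_dvd_pow_of_dvd hd2 2)
    have : (Int.gcd a b) ^ 2 ∣ p := by exact_mod_cast hsq
    exact sq_dvd_prime_aux hp this
  -- b ≠ 0
  have hbz : b ≠ 0 := by
    intro h
    rw [h] at hab
    have hnp : a.natAbs ^ 2 = p := by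
      have : ((a.natAbs ^ 2 : ℕ) : ℤ) = (p : ℤ) := by
        push_cast
        rw [sq_abs]
        linarith [hab]
      exact_mod_cast this
    have h1 := sq_dvd_prime_aux hp (dvd_of_eq hnp)
    rw [h1] at hnp
    simp at hnp
    have := hp.two_le
    omega
  -- casts
  have hcast : ((a : ZMod p)) ^ 2 + ((b : ZMod p)) ^ 2 = 0 := by
    have h0 : (((a ^ 2 + b ^ 2 : ℤ)) : ZMod p) = 0 := by
      rw [← hab]; simp
    push_cast at h0; exact h0
  have hb0 : ((b : ℤ) : ZMod p) ≠ 0 := by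
    intro h
    have hpb : (p : ℤ) ∣ b := (ZMod.intCast_zmod_eq_zero_iff_dvd b p).mp h
    have hpp : Prime (p : ℤ) := Nat.prime_iff_prime_int.mp hp
    have hpa : (p : ℤ) ∣ a := by
      apply hpp.dvd_of_dvd_pow (n := 2)
      have h1 : (p : ℤ) ∣ b ^ 2 := dvd_pow hpb two_ne_zero
      have h2 : a ^ 2 = (p : ℤ) - b ^ 2 := by linarith [hab]
      rw [h2]; exact dvd_sub (dvd_refl _) h1
    have hps : (p : ℤ) ^ 2 ∣ a ^ 2 + b ^ 2 :=
      dvd_add (pow_dvd_pow_of_dvd hpa 2) (pow_dvd_pow_of_dvd hpb 2)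
    rw [← hab] at hps
    have hnat : p ^ 2 ∣ p := by exact_mod_cast hps
    have := Nat.le_of_dvd hp.pos hnat
    nlinarith [hp.two_le]
  -- squares : 2, -1
  have sq2 : IsSquare (2 : ZMod p) := (ZMod.exists_sq_eq_two_iff hp2).mpr (Or.inl h8)
  have sqneg : IsSquare (-1 : ZMod p) := ZMod.exists_sq_eq_neg_one_iff.mpr (by omega)
  -- square : b
  have sqb : IsSquare ((b : ℤ) : ZMod p) := by
    set n := b.natAbs with hn
    have hn0 : n ≠ 0 := fun h => hbz (Int.natAbs_eq_zero.mp h)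
    set K := n.factorization 2 with hK
    set m := n / 2 ^ K with hm
    have hnm : 2 ^ K * m = n := Nat.ordProj_mul_ordCompl_eq_self n 2
    have hmodd : ¬ 2 ∣ m := Nat.not_dvd_ordCompl Nat.prime_two hn0
    have hmo : Odd m := Nat.odd_iff.mpr (Nat.two_dvd_ne_zero.mp hmodd)
    have hmb : (m : ℤ) ∣ b := by
      have h1 : m ∣ n := Dvd.intro_left _ hnm
      exact (Int.natCast_dvd_natCast.mpr h1).trans (Int.natAbs_dvd.mpr dvd_rfl)
    have hgam : Int.gcd a (m : ℤ) = 1 := by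
      have h1 : Nat.gcd a.natAbs m ∣ Nat.gcd a.natAbs n :=
        Nat.dvd_gcd (Nat.gcd_dvd_left _ _) ((Nat.gcd_dvd_right _ _).trans (Dvd.intro_left _ hnm))
      have h2 : Nat.gcd a.natAbs n = 1 := hgab
      have h3 : Nat.gcd a.natAbs m = 1 := Nat.eq_one_of_dvd_one (h2 ▸ h1)
      simpa [Int.gcd] using h3
    have hmd : (m : ℤ) ∣ (p : ℤ) - a ^ 2 := by
      have he : (p : ℤ) - a ^ 2 = b ^ 2 := by linarith [hab]
      rw [he]; exact dvd_pow hmb two_ne_zero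
    have sqm : IsSquare ((m : ℤ) : ZMod p) := isSquare_of_mod_sq hp4 m hmo a hmd hgam
    have sqn : IsSquare ((n : ZMod p)) := by
      rw [← hnm]
      push_cast
      exact (IsSquare.pow K sq2).mul (by exact_mod_cast sqm)
    rcases Int.natAbs_eq b with h | h
    · rw [h, Int.cast_natCast]; exact sqn
    · rw [h, Int.cast_neg, Int.cast_natCast,
        show -((n : ZMod p)) = (-1) * (n : ZMod p) from by ring]
      exact sqneg.mul sqn
  -- square : a + b
  have habz : a + b ≠ 0 := by intro h; omega
  have sqab : IsSquare (((a + b : ℤ)) : ZMod p) := by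
    set m2 := (a + b).natAbs with hm2
    have hm2o : Odd m2 := Int.natAbs_odd.mpr (Int.odd_iff.mpr (by omega))
    have hm21 : m2 % 2 = 1 := Nat.odd_iff.mp hm2o
    have h78 : m2 % 8 = 1 ∨ m2 % 8 = 7 := by
      rcases Int.natAbs_eq (a + b) with h | h
      · left; omega
      · right; omega
    have hgm2 : Int.gcd (a - b) (m2 : ℤ) = 1 := by
      have e1 : ((m2 : ℤ)).natAbs = m2 := Int.natAbs_natCast m2
      set g := Nat.gcd (a - b).natAbs m2 with hg
      have hg1 : (g : ℤ) ∣ (a - b) :=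
        (Int.natCast_dvd_natCast.mpr (Nat.gcd_dvd_left _ _)).trans (Int.natAbs_dvd.mpr dvd_rfl)
      have hg2 : (g : ℤ) ∣ (a + b) :=
        (Int.natCast_dvd_natCast.mpr (Nat.gcd_dvd_right _ _)).trans (Int.natAbs_dvd.mpr dvd_rfl)
      have hgodd : ¬ 2 ∣ g := by
        intro h2g
        have h2ab : (2 : ℤ) ∣ a + b := dvd_trans (by exact_mod_cast h2g) hg2
        omega
      have hcop : Nat.Coprime g 2 :=
        Nat.coprime_comm.mp ((Nat.Prime.coprime_iff_not_dvd Nat.prime_two).mpr hgodd)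
      have hga : g ∣ a.natAbs := by
        have h2a : (g : ℤ) ∣ 2 * a := by
          have he : 2 * a = (a + b) + (a - b) := by ring
          rw [he]; exact dvd_add hg2 hg1
        have hh : g ∣ (2 * a).natAbs := Int.natCast_dvd.mp h2a
        rw [Int.natAbs_mul] at hh
        norm_num at hh
        exact hcop.dvd_of_dvd_mul_left hh
      have hgb : g ∣ b.natAbs := by
        have h2b : (g : ℤ) ∣ 2 * b := by
          have he : 2 * b = (a + b) - (a - b) := by ring
          rw [he]; exact dvd_sub hg2 hg1
        have hh : g ∣ (2 * b).natAbs := Int.natCast_dvd.mp h2b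
        rw [Int.natAbs_mul] at hh
        norm_num at hh
        exact hcop.dvd_of_dvd_mul_left hh
      have hdg : g ∣ Nat.gcd a.natAbs b.natAbs := Nat.dvd_gcd hga hgb
      have hg3 : g ∣ 1 := by rwa [show Nat.gcd a.natAbs b.natAbs = 1 from hgab] at hdg
      simpa [Int.gcd, e1] using Nat.eq_one_of_dvd_one hg3
    have hm2ab : (m2 : ℤ) ∣ (a + b) := Int.natAbs_dvd.mpr dvd_rfl
    have hmd2 : (m2 : ℤ) ∣ 2 * (p : ℤ) - (a - b) ^ 2 := by
      have he : 2 * (p : ℤ) - (a - b) ^ 2 = (a + b) ^ 2 := by linear_combination 2 * hab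
      rw [he]; exact dvd_pow hm2ab two_ne_zero
    have hJ2p : jacobiSym (2 * (p : ℤ)) m2 = 1 := by
      have h1 : jacobiSym (2 * (p : ℤ)) m2 = jacobiSym ((a - b) ^ 2) m2 := by
        apply jacobiSym.mod_left'
        exact Int.modEq_iff_dvd.mpr
          (by rw [show (a - b) ^ 2 - 2 * (p : ℤ) = -(2 * (p : ℤ) - (a - b) ^ 2) by ring]
              exact dvd_neg.mpr hmd2)
      rw [h1, jacobiSym.sq_one' hgm2]
    have hJ2 : jacobiSym 2 m2 = 1 := by
      rw [jacobiSym.at_two hm2o, ZMod.χ₈_nat_eq_if_mod_eight,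
        if_neg (by omega : ¬ m2 % 2 = 0), if_pos h78]
    have hJp : jacobiSym ((p : ℤ)) m2 = 1 := by
      have hx := hJ2p
      rw [jacobiSym.mul_left 2 (p : ℤ) m2, hJ2, one_mul] at hx
      exact hx
    have hJm2 : jacobiSym ((m2 : ℤ)) p = 1 := by
      rw [jacobiSym.quadratic_reciprocity_one_mod_four' hm2o hp4]
      exact hJp
    have sqm2 : IsSquare ((m2 : ℤ) : ZMod p) := ZMod.isSquare_of_jacobiSym_eq_one hJm2
    rcases Int.natAbs_eq (a + b) with h | h
    · rw [h]; exact sqm2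
    · rw [h, Int.cast_neg, Int.cast_natCast,
        show -((m2 : ZMod p)) = (-1) * (m2 : ZMod p) from by ring]
      exact sqneg.mul (by exact_mod_cast sqm2)
  -- assemble
  set i : ZMod p := (a : ZMod p) * ((b : ZMod p))⁻¹ with hi_def
  have hi : i ^ 2 = -1 := by
    rw [hi_def]
    field_simp
    linear_combination hcast
  have h2ne : (2 : ZMod p) ≠ 0 := by
    have h2 : ((2 : ℕ) : ZMod p) ≠ 0 := by
      rw [Ne, ZMod.natCast_eq_zero_iff]
      intro h
      have := Nat.le_of_dvd (by norm_num) h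
      have := hp.two_le
      omega
    simpa using h2
  have h1i_eq : (1 : ZMod p) + i = ((a + b : ℤ) : ZMod p) * ((b : ℤ) : ZMod p)⁻¹ := by
    rw [hi_def]
    field_simp
    push_cast
    ring
  clear_value i
  have h1i : (1 : ZMod p) + i ≠ 0 := by
    intro h
    have hi1 : i = -1 := by linear_combination h
    rw [hi1] at hi
    have h20 : (2 : ZMod p) = 0 := by linear_combination hi
    exact h2ne h20
  have sqbinv : IsSquare (((b : ℤ) : ZMod p))⁻¹ := by
    rcases sqb with ⟨r, hr⟩
    exact ⟨r⁻¹, by rw [hr, mul_inv]⟩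
  have sq2i : IsSquare ((2 : ZMod p) * (1 + i)) := by
    rw [h1i_eq, ← mul_assoc]
    exact (sq2.mul sqab).mul sqbinv
  obtain ⟨w, hw⟩ := sq2i
  have hw0 : w ≠ 0 := by
    intro h
    rw [h, mul_zero] at hw
    exact (mul_ne_zero h2ne h1i) hw
  have key : ((1 : ZMod p) + i + s) ^ 2 = (2 * (1 + i)) * (1 + s) := by
    linear_combination hi + hs
  refine ⟨(1 + i + s) * w⁻¹, ?_⟩
  rw [hw] at key
  symm
  rw [show ((1 : ZMod p) + i + s) * w⁻¹ * ((1 + i + s) * w⁻¹)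
        = ((1 + i + s) ^ 2) * (w⁻¹ * w⁻¹) from by ring, key,
    show w * w * (1 + s) * (w⁻¹ * w⁻¹) = (1 + s) * ((w * w⁻¹) * (w * w⁻¹)) from by ring,
    mul_inv_cancel₀ hw0, mul_one, mul_one]
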